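/- Let G be a Polish group and H an open subgroup of G. Then G is locally Roelcke precompact if and only if H (with the subspace topology, under which it is a Polish group) is locally Roelcke precompact. -/

import Mathlib

open scoped Pointwise

/-- A subset `A` of a topological group `G` is *Roelcke precompact* if for every
neighborhood `V` of the identity there is a finite set `F ⊆ G` with `A ⊆ V * F * V`,
where `V * F * V = {v * f * w : v, w ∈ V, f ∈ F}`. -/
def RoelckePrecompact {G : Type*} [Group G] [TopologicalSpace G] (A : Set G) : Prop :=
  ∀ V ∈ nhds (1 : G), ∃ F : Finset G, A ⊆ V * (F : Set G) * V

/-- A topological group is *locally Roelcke precompact* if some open neighborhood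
of the identity is Roelcke precompact. -/
def LocallyRoelckePrecompact (G : Type*) [Group G] [TopologicalSpace G] : Prop :=
  ∃ U : Set G, IsOpen U ∧ (1 : G) ∈ U ∧ RoelckePrecompact U

/-- For an open subgroup `H` of a Polish group `G` (a Polish group in the subspace
topology), `G` is locally Roelcke precompact if and only if `H` is. -/
theorem locallyRoelckePrecompact_iff_openSubgroup
    (G : Type*) [Group G] [TopologicalSpace G] [IsTopologicalGroup G] [PolishSpace G]
    (H : Subgroup G) (hH : IsOpen (H : Set G)) :
    LocallyRoelckePrecompact G ↔ LocallyRoelckePrecompact H := by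
  classical
  have hemb := hH.isOpenEmbedding_subtypeVal
  constructor
  · rintro ⟨U, hUo, hU1, hURP⟩
    refine ⟨Subtype.val ⁻¹' U, hUo.preimage continuous_subtype_val, hU1, ?_⟩
    intro V hV
    have hV' : (Subtype.val '' V) ∈ nhds (1 : G) := by
      have := hemb.isOpenMap.image_mem_nhds hV
      exact this
    obtain ⟨F, hF⟩ := hURP _ hV'
    refine ⟨F.preimage Subtype.val (Subtype.val_injective.injOn), ?_⟩
    rintro a ha
    have : (a : G) ∈ (Subtype.val '' V) * (F : Set G) * (Subtype.val '' V) := hF ha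
    obtain ⟨y, hy, w, hw, hyw⟩ := this
    obtain ⟨v, hv, f, hf, rfl⟩ := hy
    obtain ⟨v', hv', rfl⟩ := hv
    obtain ⟨w', hw', rfl⟩ := hw
    have hfH : f ∈ H := by
      have : f = (v' : G)⁻¹ * (a : G) * (w' : G)⁻¹ := by
        rw [← hyw]; group
      rw [this]
      exact mul_mem (mul_mem (inv_mem v'.2) a.2) (inv_mem w'.2)
    have hfF : (⟨f, hfH⟩ : H) ∈ F.preimage Subtype.val (Subtype.val_injective.injOn) := by
      simpa [Finset.mem_preimage] using hf
    have : a = v' * ⟨f, hfH⟩ * w' := by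
      apply Subtype.ext
      simpa using hyw.symm
    rw [this]
    exact Set.mul_mem_mul (Set.mul_mem_mul hv' hfF) hw'
  · rintro ⟨U, hUo, hU1, hURP⟩
    refine ⟨Subtype.val '' U, hemb.isOpenMap _ hUo, ⟨1, hU1, rfl⟩, ?_⟩
    intro V hV
    have hV' : (Subtype.val ⁻¹' V : Set H) ∈ nhds (1 : H) := by
      exact continuous_subtype_val.continuousAt.preimage_mem_nhds (by simpa using hV)
    obtain ⟨F, hF⟩ := hURP _ hV'
    refine ⟨F.image Subtype.val, ?_⟩
    rintro x ⟨a, ha, rfl⟩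
    have := hF ha
    obtain ⟨y, hy, w, hw, hyw⟩ := this
    obtain ⟨v, hv, f, hf, rfl⟩ := hy
    have : (a : G) = (v : G) * (f : G) * (w : G) := by
      rw [← hyw]; rfl
    rw [this]
    exact Set.mul_mem_mul (Set.mul_mem_mul hv (Finset.mem_coe.2 (Finset.mem_image_of_mem _ hf))) hw
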